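/- Let φ ∈ ℝ and g ∈ ℂ, and set c = cosh(2φ) (so c ≥ 1 > 0). Then the 2×2 complex matrix J with entries J₀₀ = 2(c² + |g|²)/c, J₀₁ = −g/c, J₁₀ = −conj(g)/c, J₁₁ = 1/(2c) is Hermitian, positive definite, and has determinant equal to 1. -/

import Mathlib

open Matrix
open scoped ComplexOrder

/-- Yang's J-matrix of the explicit Ward-ansatz solution is Hermitian, positive definite,
and has determinant 1. -/
theorem stmt_12 (φ : ℝ) (g : ℂ) (c : ℝ) (hc : c = Real.cosh (2 * φ))
    (J : Matrix (Fin 2) (Fin 2) ℂ)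
    (hJ : J = !![(2 * ((c : ℂ) ^ 2 + g * (starRingEnd ℂ) g)) / (c : ℂ), -g / (c : ℂ);
                 -((starRingEnd ℂ) g) / (c : ℂ), 1 / (2 * (c : ℂ))]) :
    J.IsHermitian ∧ J.PosDef ∧ J.det = 1 := by
  have hc1 : 1 ≤ c := hc ▸ Real.one_le_cosh _
  have hc0 : (0:ℝ) < c := lt_of_lt_of_le one_pos hc1
  have hc0' : (c:ℂ) ≠ 0 := by exact_mod_cast hc0.ne'
  subst hJ
  have herm : (!![(2 * ((c : ℂ) ^ 2 + g * (starRingEnd ℂ) g)) / (c : ℂ), -g / (c : ℂ);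
                 -((starRingEnd ℂ) g) / (c : ℂ), 1 / (2 * (c : ℂ))] :
      Matrix (Fin 2) (Fin 2) ℂ).IsHermitian := by
    unfold Matrix.IsHermitian
    ext i j
    fin_cases i <;> fin_cases j <;>
      simp [Matrix.conjTranspose_apply, map_div₀, _root_.map_mul, map_add, map_pow,
        Complex.conj_conj, Complex.conj_ofReal] <;> ring
  refine ⟨herm, posDef_iff_dotProduct_mulVec.mpr ⟨herm, ?_⟩, ?_⟩
  · intro x hx
    set u := x 0 with hu
    set v := x 1 with hv
    have hE : star x ⬝ᵥ ((!![(2 * ((c : ℂ) ^ 2 + g * (starRingEnd ℂ) g)) / (c : ℂ), -g / (c : ℂ);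
                 -((starRingEnd ℂ) g) / (c : ℂ), 1 / (2 * (c : ℂ))]) *ᵥ x)
        = (starRingEnd ℂ) u * ((2 * ((c : ℂ) ^ 2 + g * (starRingEnd ℂ) g)) / (c : ℂ) * u
            + (-g / (c : ℂ)) * v)
          + (starRingEnd ℂ) v * ((-((starRingEnd ℂ) g) / (c : ℂ)) * u + (1 / (2 * (c : ℂ))) * v) := by
      simp [dotProduct, Matrix.mulVec, Fin.sum_univ_two, hu, hv]
    set a : ℝ := 2 * (c ^ 2 + Complex.normSq g) / c with ha
    have ha0 : 0 < a := by
      apply div_pos _ hc0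
      nlinarith [Complex.normSq_nonneg g, sq_nonneg c]
    have ha0' : ((a:ℝ):ℂ) ≠ 0 := by exact_mod_cast ha0.ne'
    set w : ℂ := (a : ℂ) * u + (-g / (c : ℂ)) * v with hw
    have hgg : g * (starRingEnd ℂ) g = (Complex.normSq g : ℂ) := Complex.mul_conj g
    have hcast : ((a : ℝ) : ℂ) = 2 * ((c : ℂ) ^ 2 + (Complex.normSq g : ℂ)) / (c : ℂ) := by
      push_cast [ha]; ring
    have key : (a : ℂ) * (star x ⬝ᵥ ((!![(2 * ((c : ℂ) ^ 2 + g * (starRingEnd ℂ) g)) / (c : ℂ),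
          -g / (c : ℂ); -((starRingEnd ℂ) g) / (c : ℂ), 1 / (2 * (c : ℂ))]) *ᵥ x))
        = (Complex.normSq w : ℂ) + (Complex.normSq v : ℂ) := by
      rw [hE, ← Complex.mul_conj w, ← Complex.mul_conj v, hw]
      simp only [map_add, _root_.map_mul, map_neg, map_div₀, Complex.conj_conj,
        Complex.conj_ofReal]
      rw [hgg, hcast]
      field_simp
      linear_combination (-(v * (starRingEnd ℂ) v)) * hgg
    have hwv : 0 < Complex.normSq w + Complex.normSq v := by
      rcases eq_or_ne v 0 with hv0 | hv0
      · have hu0 : u ≠ 0 := by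
          intro h
          apply hx
          funext i
          fin_cases i
          · exact h
          · exact hv0
        have hw0 : w ≠ 0 := by
          rw [hw, hv0]
          simpa using mul_ne_zero ha0' hu0
        have := Complex.normSq_pos.mpr hw0
        nlinarith [Complex.normSq_nonneg v]
      · have := Complex.normSq_pos.mpr hv0
        nlinarith [Complex.normSq_nonneg w]
    have hEval : star x ⬝ᵥ ((!![(2 * ((c : ℂ) ^ 2 + g * (starRingEnd ℂ) g)) / (c : ℂ),
          -g / (c : ℂ); -((starRingEnd ℂ) g) / (c : ℂ), 1 / (2 * (c : ℂ))]) *ᵥ x)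
        = (((Complex.normSq w + Complex.normSq v) / a : ℝ) : ℂ) := by
      have h2 : (((Complex.normSq w + Complex.normSq v) / a : ℝ) : ℂ)
          = ((a:ℝ):ℂ)⁻¹ * ((Complex.normSq w : ℂ) + (Complex.normSq v : ℂ)) := by
        push_cast; ring
      rw [h2, ← key, inv_mul_cancel_left₀ ha0']
    rw [hEval]
    have hpos : (0:ℝ) < (Complex.normSq w + Complex.normSq v) / a := div_pos hwv ha0
    exact_mod_cast hpos
  · rw [Matrix.det_fin_two_of]
    field_simp
    ring
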